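/- For partitions μ, λ of length n, if λ − μ ∈ Ψ_1 (i.e., μ ⪯ λ) then [μ]_1 + … + [μ]_m ≤ [λ]_1 + … + [λ]_m for all m = 1,…,n (i.e., [μ] ≤ [λ] in the dominance order on ℕ^n). -/

import Mathlib

open Finset

/-- `[λ]_m := ∑_{k=m}^{n} (−1)^{k−m} λ_k` (0-based indices). -/
noncomputable def brk {n : ℕ} (lam : Fin n → ℤ) (m : Fin n) : ℤ :=
  ∑ k ∈ Finset.univ.filter (fun k : Fin n => m ≤ k), (-1) ^ ((k : ℕ) - (m : ℕ)) * lam k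

/-- `Ψ_1`, generated by the simple roots `ε_i − ε_{i+2}` together with
`ε_{n−1} + ε_n` and `ε_{2⌈n/2⌉−1}` (the largest odd 1-based index,
0-based `2*((n-1)/2)`). -/
noncomputable def Psi1 (n : ℕ) (hn : 2 ≤ n) : AddSubmonoid (Fin n → ℤ) :=
  AddSubmonoid.closure
    ({v | ∃ i : ℕ, ∃ h : i + 2 < n,
        v = Pi.single (⟨i, by omega⟩ : Fin n) 1 - Pi.single (⟨i + 2, h⟩ : Fin n) 1} ∪
      {Pi.single (⟨n - 2, by omega⟩ : Fin n) 1 + Pi.single (⟨n - 1, by omega⟩ : Fin n) 1,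
       Pi.single (⟨2 * ((n - 1) / 2), by omega⟩ : Fin n) 1})

lemma brk_add {n : ℕ} (u w : Fin n → ℤ) (k : Fin n) :
    brk (u + w) k = brk u k + brk w k := by
  unfold brk
  rw [← Finset.sum_add_distrib]
  exact Finset.sum_congr rfl fun x _ => by rw [Pi.add_apply]; ring

lemma brk_sub {n : ℕ} (u w : Fin n → ℤ) (k : Fin n) :
    brk (u - w) k = brk u k - brk w k := by
  unfold brk
  rw [← Finset.sum_sub_distrib]
  exact Finset.sum_congr rfl fun x _ => by rw [Pi.sub_apply]; ring

lemma brk_zero {n : ℕ} (k : Fin n) : brk (0 : Fin n → ℤ) k = 0 := by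
  simp [brk]

lemma brk_single {n : ℕ} (a k : Fin n) :
    brk (Pi.single a (1:ℤ)) k = if k ≤ a then (-1:ℤ) ^ ((a:ℕ) - (k:ℕ)) else 0 := by
  unfold brk
  have h1 : ∀ x ∈ Finset.univ.filter (fun x : Fin n => k ≤ x),
      (-1:ℤ) ^ ((x:ℕ) - (k:ℕ)) * (Pi.single a (1:ℤ) : Fin n → ℤ) x
        = if x = a then (-1:ℤ) ^ ((a:ℕ) - (k:ℕ)) else 0 := by
    intro x _
    by_cases hx : x = a
    · subst hx; rw [Pi.single_eq_same, mul_one, if_pos rfl]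
    · rw [Pi.single_eq_of_ne hx, mul_zero, if_neg hx]
  rw [Finset.sum_congr rfl h1, Finset.sum_ite_eq']
  simp

lemma alt_sum (a t : ℕ) (h : t ≤ a) :
    ∑ k ∈ Finset.range (t+1), (-1:ℤ) ^ (a - k)
      = if Even t then (-1:ℤ) ^ (a - t) else 0 := by
  induction t with
  | zero => simp
  | succ t ih =>
    rw [Finset.sum_range_succ, ih (by omega)]
    have he : a - t = (a - (t+1)) + 1 := by omega
    by_cases hp : Even t
    · have h2 : ¬ Even (t+1) := by rw [Nat.even_iff] at *; omega
      rw [if_pos hp, if_neg h2, he, pow_succ]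
      ring
    · have h2 : Even (t+1) := by rw [Nat.even_iff] at *; omega
      rw [if_neg hp, if_pos h2, zero_add]

/-- The coefficient `S(single a 1, m)` as a function of `N = m.val` and `a`. -/
def cfun (N a : ℕ) : ℤ := if Even (min N a) then (-1:ℤ) ^ (a - min N a) else 0

lemma cfun_le (N a : ℕ) (h : a ≤ N) : cfun N a = if Even a then 1 else 0 := by
  unfold cfun
  rw [min_eq_right h, Nat.sub_self, pow_zero]

lemma cfun_gt (N a : ℕ) (h : N < a) :
    cfun N a = if Even N then (-1:ℤ) ^ (a - N) else 0 := by
  unfold cfun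
  rw [min_eq_left (by omega)]

lemma S_single {n : ℕ} (m a : Fin n) :
    ∑ k ∈ Finset.univ.filter (fun k : Fin n => k ≤ m), brk (Pi.single a (1:ℤ)) k
      = cfun m.val a.val := by
  have h1 : ∀ k : Fin n, (if k ≤ m then brk (Pi.single a (1:ℤ)) k else 0)
      = (fun i => if i ≤ min m.val a.val then (-1:ℤ) ^ (a.val - i) else 0) (k.val) := by
    intro k
    rw [brk_single]
    simp only [Fin.le_def, le_min_iff]
    by_cases h1 : (k:ℕ) ≤ (m:ℕ) <;> by_cases h2 : (k:ℕ) ≤ (a:ℕ) <;>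
      simp [h1, h2]
  rw [Finset.sum_filter, Finset.sum_congr rfl fun k _ => h1 k,
      Fin.sum_univ_eq_sum_range (fun i => if i ≤ min m.val a.val then (-1:ℤ) ^ (a.val - i) else 0)]
  set t := min m.val a.val with ht
  have htm : t ≤ m.val := by rw [ht]; exact min_le_left _ _
  have hta : t ≤ a.val := by rw [ht]; exact min_le_right _ _
  have htn : t + 1 ≤ n := by have := m.isLt; omega
  have hz : ∀ x ∈ Finset.range n, x ∉ Finset.range (t+1) →
      (if x ≤ t then (-1:ℤ) ^ (a.val - x) else 0) = 0 := by
    intro x _ hx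
    simp only [Finset.mem_range] at hx
    rw [if_neg (by omega)]
  rw [← Finset.sum_subset (Finset.range_subset_range.2 htn) hz]
  have h2 : ∀ i ∈ Finset.range (t+1),
      (if i ≤ t then (-1:ℤ) ^ (a.val - i) else 0) = (-1:ℤ) ^ (a.val - i) := by
    intro i hi
    simp only [Finset.mem_range] at hi
    rw [if_pos (by omega)]
  rw [Finset.sum_congr rfl h2, alt_sum a.val t hta]
  unfold cfun
  rw [← ht]

lemma c_root (N i : ℕ) : cfun N (i+2) ≤ cfun N i := by
  rcases le_or_gt (i+2) N with h | h
  · rw [cfun_le _ _ h, cfun_le _ _ (by omega)]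
    have h2 : Even (i+2) ↔ Even i := by rw [Nat.even_iff, Nat.even_iff]; omega
    rw [if_congr h2 rfl rfl]
  · rw [cfun_gt _ _ h]
    rcases le_or_gt i N with h2 | h2
    · rw [cfun_le _ _ h2]
      rcases (by omega : N = i ∨ N = i + 1) with hN | hN
      · rw [hN, show i + 2 - i = 2 from by omega]
        split <;> norm_num
      · rw [hN, show i + 2 - (i + 1) = 1 from by omega, pow_one]
        by_cases hp : Even i
        · have hne : ¬ Even (i+1) := by rw [Nat.even_iff] at *; omega
          rw [if_neg hne, if_pos hp]; norm_num
        · have hev : Even (i+1) := by rw [Nat.even_iff] at *; omega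
          rw [if_pos hev, if_neg hp]; norm_num
    · rw [cfun_gt _ _ h2]
      have hs : i + 2 - N = (i - N) + 2 := by omega
      rw [hs]
      by_cases hN : Even N
      · rw [if_pos hN, if_pos hN, pow_add]; norm_num
      · rw [if_neg hN, if_neg hN]

lemma c_pair (N a : ℕ) : 0 ≤ cfun N a + cfun N (a+1) := by
  rcases le_or_gt (a+1) N with h | h
  · rw [cfun_le _ _ h, cfun_le _ _ (by omega)]
    split <;> split <;> norm_num
  · rw [cfun_gt _ _ h]
    rcases le_or_gt a N with h2 | h2
    · rw [show N = a from by omega, cfun_le _ _ le_rfl,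
        show a + 1 - a = 1 from by omega, pow_one]
      by_cases hp : Even a
      · rw [if_pos hp, if_pos hp]; norm_num
      · rw [if_neg hp, if_neg hp]; norm_num
    · rw [cfun_gt _ _ h2]
      have hs : a + 1 - N = (a - N) + 1 := by omega
      rw [hs]
      by_cases hN : Even N
      · rw [if_pos hN, if_pos hN]
        have : (-1:ℤ) ^ (a - N) + (-1:ℤ) ^ ((a - N) + 1) = 0 := by
          rw [pow_succ]; ring
        linarith
      · rw [if_neg hN, if_neg hN]; norm_num

lemma c_even (N p : ℕ) (hp : Even p) : 0 ≤ cfun N p := by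
  rcases le_or_gt p N with h | h
  · rw [cfun_le _ _ h, if_pos hp]; norm_num
  · rw [cfun_gt _ _ h]
    by_cases hN : Even N
    · rw [if_pos hN]
      have hev : Even (p - N) := by rw [Nat.even_iff] at *; omega
      rw [hev.neg_one_pow]; norm_num
    · rw [if_neg hN]

/-- If `μ ⪯ λ` (i.e. `λ − μ ∈ Ψ_1`) for partitions `μ, λ`, then `[μ] ≤ [λ]` in the
dominance order on `ℕ^n`. -/
theorem brk_dominance_of_preceq (n : ℕ) (hn : 2 ≤ n) (mu lam : Fin n → ℤ)
    (hmu : (∀ i j : Fin n, i ≤ j → mu j ≤ mu i) ∧ ∀ i, 0 ≤ mu i)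
    (hlam : (∀ i j : Fin n, i ≤ j → lam j ≤ lam i) ∧ ∀ i, 0 ≤ lam i)
    (h : lam - mu ∈ Psi1 n hn) :
    ∀ m : Fin n,
      ∑ k ∈ Finset.univ.filter (fun k : Fin n => k ≤ m), brk mu k ≤
        ∑ k ∈ Finset.univ.filter (fun k : Fin n => k ≤ m), brk lam k := by
  intro m
  have key : ∀ v ∈ Psi1 n hn,
      0 ≤ ∑ k ∈ Finset.univ.filter (fun k : Fin n => k ≤ m), brk v k := by
    intro v hv
    induction hv using AddSubmonoid.closure_induction with
    | mem x hx =>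
      rcases hx with ⟨i, hi, rfl⟩ | hx
      · simp only [brk_sub, Finset.sum_sub_distrib, S_single, sub_nonneg]
        exact c_root m.val i
      · rcases hx with rfl | rfl
        · simp only [brk_add, Finset.sum_add_distrib, S_single]
          rw [show n - 1 = (n - 2) + 1 from by omega]
          exact c_pair m.val (n - 2)
        · rw [S_single]
          refine c_even m.val _ ?_
          rw [show ((⟨2 * ((n - 1) / 2), by omega⟩ : Fin n) : ℕ) = 2 * ((n - 1) / 2) from rfl]
          exact ⟨(n - 1) / 2, by omega⟩
    | zero => simp [brk_zero]
    | add x y _ _ hx hy =>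
      simp only [brk_add, Finset.sum_add_distrib]
      positivity
  have h0 := key _ h
  calc ∑ k ∈ Finset.univ.filter (fun k : Fin n => k ≤ m), brk mu k
      ≤ ∑ k ∈ Finset.univ.filter (fun k : Fin n => k ≤ m), brk mu k
        + ∑ k ∈ Finset.univ.filter (fun k : Fin n => k ≤ m), brk (lam - mu) k := by linarith
    _ = _ := by
        rw [← Finset.sum_add_distrib]
        exact Finset.sum_congr rfl fun k _ => by rw [brk_sub]; ring
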